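/- arXiv:2103.09791 — 3 statements merged into one kernel-verified Lean document; each statement's English description precedes it below -/
import Mathlib

section
/- OS-ELM computes the batch least-squares solution: under the OS-ELM recursion with targets, for every i ≥ 0 the weight matrix satisfies β_i = P_i · (H₀ᵀT₀ + Σ_{j=1}^{i} h_jᵀt_j); that is, the online solution after i training steps equals the solution (H₀ᵀH₀ + Σ_{j=1}^{i} h_jᵀh_j)⁻¹(H₀ᵀT₀ + Σ_{j=1}^{i} h_jᵀt_j) computed from all data seen so far. -/
open Matrix

lemma my_posDef_of_isUnit {n : ℕ} {A : Matrix (Fin n) (Fin n) ℝ}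
    (hA : A.PosSemidef) (hu : IsUnit A) : A.PosDef := by
  refine posDef_iff_dotProduct_mulVec.mpr ⟨hA.1, fun x hx => ?_⟩
  have h1 := hA.dotProduct_mulVec_nonneg x
  rcases h1.lt_or_eq with h | h
  · exact h
  · exfalso
    have h2 : A *ᵥ x = 0 := (hA.dotProduct_mulVec_zero_iff x).mp h.symm
    have hinj : Function.Injective (A.mulVec) :=
      (Matrix.mulVec_injective_iff_isUnit).mpr hu
    exact hx (hinj (by simp [h2]))

/-- OS-ELM computes the batch least-squares solution: under the OS-ELM
recursion with targets, for every i ≥ 0 the weight matrix satisfies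
β_i = P_i · (H₀ᵀT₀ + Σ_{j=1}^{i} h_jᵀt_j). -/
theorem oselm_beta_closed_form {N₀ Nh m : ℕ}
    (H₀ : Matrix (Fin N₀) (Fin Nh) ℝ) (hinv : IsUnit (H₀ᵀ * H₀))
    (T₀ : Matrix (Fin N₀) (Fin m) ℝ)
    (h : ℕ → Matrix (Fin 1) (Fin Nh) ℝ)
    (t : ℕ → Matrix (Fin 1) (Fin m) ℝ)
    (P : ℕ → Matrix (Fin Nh) (Fin Nh) ℝ)
    (β : ℕ → Matrix (Fin Nh) (Fin m) ℝ)
    (hP0 : P 0 = (H₀ᵀ * H₀)⁻¹)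
    (hPrec : ∀ i, 1 ≤ i → P i = ((P (i - 1))⁻¹ + (h i)ᵀ * h i)⁻¹)
    (hβ0 : β 0 = P 0 * H₀ᵀ * T₀)
    (hβrec : ∀ i, 1 ≤ i →
      β i = β (i - 1) + P i * (h i)ᵀ * (t i - h i * β (i - 1))) :
    ∀ i, β i = P i * (H₀ᵀ * T₀ + ∑ j ∈ Finset.Icc 1 i, (h j)ᵀ * t j) := by
  set Q : ℕ → Matrix (Fin Nh) (Fin Nh) ℝ :=
    fun i => H₀ᵀ * H₀ + ∑ j ∈ Finset.Icc 1 i, (h j)ᵀ * h j with hQ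
  set S : ℕ → Matrix (Fin Nh) (Fin m) ℝ :=
    fun i => H₀ᵀ * T₀ + ∑ j ∈ Finset.Icc 1 i, (h j)ᵀ * t j with hS
  have hH : (H₀ᵀ * H₀).PosDef := by
    refine my_posDef_of_isUnit ?_ hinv
    have := Matrix.posSemidef_conjTranspose_mul_self H₀
    simpa using this
  have hgram : ∀ j : ℕ, ((h j)ᵀ * h j).PosSemidef := by
    intro j
    have := Matrix.posSemidef_conjTranspose_mul_self (h j)
    simpa using this
  have hQpd : ∀ i, (Q i).PosDef := by
    intro i
    refine Matrix.PosDef.add_posSemidef hH ?_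
    induction i with
    | zero => simpa using Matrix.PosSemidef.zero
    | succ n ih =>
      rw [Finset.sum_Icc_succ_top (by omega : 1 ≤ n + 1)]
      exact ih.add (hgram (n+1))
  have hdet : ∀ i, IsUnit (Q i).det :=
    fun i => isUnit_iff_ne_zero.mpr (hQpd i).det_pos.ne'
  have key : ∀ i, P i = (Q i)⁻¹ ∧ β i = (Q i)⁻¹ * S i := by
    intro i
    induction i with
    | zero =>
      constructor
      · simp [hP0, hQ]
      · simp [hβ0, hP0, hQ, hS, Matrix.mul_assoc]
    | succ n ih =>
      obtain ⟨ihP, ihβ⟩ := ih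
      have hQsplit : Q (n+1) = Q n + (h (n+1))ᵀ * h (n+1) := by
        simp only [hQ]
        rw [Finset.sum_Icc_succ_top (by omega : 1 ≤ n + 1), add_assoc]
      have hSsplit : S (n+1) = S n + (h (n+1))ᵀ * t (n+1) := by
        simp only [hS]
        rw [Finset.sum_Icc_succ_top (by omega : 1 ≤ n + 1), add_assoc]
      have hPn1 : P (n+1) = (Q (n+1))⁻¹ := by
        have := hPrec (n+1) (by omega)
        simp only [Nat.add_sub_cancel] at this
        rw [this, ihP, Matrix.nonsing_inv_nonsing_inv _ (hdet n), ← hQsplit]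
      refine ⟨hPn1, ?_⟩
      have hβn1 := hβrec (n+1) (by omega)
      simp only [Nat.add_sub_cancel] at hβn1
      have hQinv : Q (n+1) * (Q (n+1))⁻¹ = 1 :=
        Matrix.mul_nonsing_inv _ (hdet (n+1))
      have hQninv : Q n * (Q n)⁻¹ = 1 :=
        Matrix.mul_nonsing_inv _ (hdet n)
      have hmain : Q (n+1) * β (n+1) = S (n+1) := by
        rw [hβn1, hPn1, ihβ, Matrix.mul_add]
        have e1 : Q (n+1) * ((Q n)⁻¹ * S n)
            = S n + (h (n+1))ᵀ * h (n+1) * ((Q n)⁻¹ * S n) := by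
          rw [hQsplit, Matrix.add_mul, ← Matrix.mul_assoc, hQninv, Matrix.one_mul]
        have e2 : Q (n+1) * ((Q (n+1))⁻¹ * (h (n+1))ᵀ *
              (t (n+1) - h (n+1) * ((Q n)⁻¹ * S n)))
            = (h (n+1))ᵀ * (t (n+1) - h (n+1) * ((Q n)⁻¹ * S n)) := by
          simp only [← Matrix.mul_assoc]
          rw [hQinv, Matrix.one_mul]
        rw [e1, e2, hSsplit, Matrix.mul_sub,
          ← Matrix.mul_assoc ((h (n+1))ᵀ) (h (n+1))]
        abel
      calc β (n+1) = (Q (n+1))⁻¹ * (Q (n+1) * β (n+1)) := by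
            rw [← Matrix.mul_assoc, Matrix.nonsing_inv_mul _ (hdet (n+1)),
              Matrix.one_mul]
        _ = (Q (n+1))⁻¹ * S (n+1) := by rw [hmain]
  intro i
  obtain ⟨hP', hβ'⟩ := key i
  rw [hβ', hP']
end

section
/- Soundness of affine-arithmetic multiplication: let x₀,…,x_n and y₀,…,y_n be real numbers, let ε ∈ [−1,1]ⁿ, and set x = x₀ + Σ_{i=1}^{n} x_iε_i and y = y₀ + Σ_{i=1}^{n} y_iε_i. Then there exists ε* ∈ [−1,1] such that x·y = x₀y₀ + Σ_{i=1}^{n}(x₀y_i + y₀x_i)ε_i + u·v·ε*, where u = Σ_{i=1}^{n}|x_i| and v = Σ_{i=1}^{n}|y_i|. -/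
/-- Soundness of affine-arithmetic multiplication: if x = x₀ + Σᵢ xᵢεᵢ and
y = y₀ + Σᵢ yᵢεᵢ with each εᵢ ∈ [−1,1], then there exists ε* ∈ [−1,1] with
x·y = x₀y₀ + Σᵢ(x₀yᵢ + y₀xᵢ)εᵢ + uvε*, where u = Σᵢ|xᵢ|, v = Σᵢ|yᵢ|. -/
theorem affine_mul_sound {n : ℕ} (x₀ y₀ : ℝ) (x y ε : Fin n → ℝ)
    (hε : ∀ i, ε i ∈ Set.Icc (-1 : ℝ) 1) :
    ∃ εstar ∈ Set.Icc (-1 : ℝ) 1,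
      (x₀ + ∑ i, x i * ε i) * (y₀ + ∑ i, y i * ε i) =
        x₀ * y₀ + (∑ i, (x₀ * y i + y₀ * x i) * ε i) +
          (∑ i, |x i|) * (∑ i, |y i|) * εstar := by
  set Q : ℝ := (∑ i, x i * ε i) * (∑ i, y i * ε i) with hQ
  set u : ℝ := ∑ i, |x i| with hu
  set v : ℝ := ∑ i, |y i| with hv
  have hsum : ∑ i, (x₀ * y i + y₀ * x i) * ε i
      = x₀ * ∑ i, y i * ε i + y₀ * ∑ i, x i * ε i := by
    rw [Finset.mul_sum, Finset.mul_sum, ← Finset.sum_add_distrib]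
    exact Finset.sum_congr rfl fun i _ => by ring
  have habs : ∀ (z : Fin n → ℝ), |∑ i, z i * ε i| ≤ ∑ i, |z i| := by
    intro z
    calc |∑ i, z i * ε i| ≤ ∑ i, |z i * ε i| := Finset.abs_sum_le_sum_abs _ _
      _ ≤ ∑ i, |z i| := by
        apply Finset.sum_le_sum
        intro i _
        rw [abs_mul]
        have h1 : |ε i| ≤ 1 := abs_le.mpr ⟨(hε i).1, (hε i).2⟩
        nlinarith [abs_nonneg (z i), abs_nonneg (ε i)]
  have hQle : |Q| ≤ u * v := by
    rw [hQ, abs_mul]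
    exact mul_le_mul (habs x) (habs y) (abs_nonneg _) (le_trans (abs_nonneg _) (habs x))
  by_cases h0 : u * v = 0
  · refine ⟨0, by constructor <;> norm_num, ?_⟩
    have hQ0 : Q = 0 := abs_eq_zero.mp (le_antisymm (h0 ▸ hQle) (abs_nonneg _))
    rw [hsum]
    nlinarith [hQ0, hQ]
  · refine ⟨Q / (u * v), ?_, ?_⟩
    · have huv : 0 < u * v := lt_of_le_of_ne (le_trans (abs_nonneg Q) hQle) (Ne.symm h0)
      constructor
      · rw [le_div_iff₀ huv]; nlinarith [neg_abs_le Q]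
      · rw [div_le_one huv]; exact le_trans (le_abs_self Q) hQle
    · rw [hsum, hQ]
      field_simp [mul_ne_zero_iff.mp h0]
      ring
end

section
/- Soundness of the min-max reciprocal approximation (positive case): let a, b be real numbers with 0 < a < b, and let y ∈ [a, b]. With p = −1/b², q = (a+b)²/(2ab²) and d = (a−b)²/(2ab²), the reciprocal satisfies |1/y − (p·y + q)| ≤ d; equivalently, there exists ε* ∈ [−1,1] such that 1/y = p·y + q + d·ε*. -/
/-- Soundness of the min-max reciprocal approximation (positive case):
for 0 < a < b and y ∈ [a,b], with p = −1/b², q = (a+b)²/(2ab²),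
d = (a−b)²/(2ab²), we have |1/y − (p·y + q)| ≤ d; equivalently,
there exists ε* ∈ [−1,1] with 1/y = p·y + q + d·ε*. -/
theorem minmax_reciprocal_sound (a b y : ℝ) (ha : 0 < a) (hab : a < b)
    (hy : y ∈ Set.Icc a b) :
    |1 / y - ((-1 / b ^ 2) * y + (a + b) ^ 2 / (2 * a * b ^ 2))| ≤
        (a - b) ^ 2 / (2 * a * b ^ 2) ∧
      ∃ εstar ∈ Set.Icc (-1 : ℝ) 1,
        1 / y = (-1 / b ^ 2) * y + (a + b) ^ 2 / (2 * a * b ^ 2) +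
          (a - b) ^ 2 / (2 * a * b ^ 2) * εstar := by
  obtain ⟨hay, hyb⟩ := hy
  have hb : (0:ℝ) < b := ha.trans hab
  have hy0 : (0:ℝ) < y := ha.trans_le hay
  have hd : (0:ℝ) < (a - b) ^ 2 / (2 * a * b ^ 2) := by
    apply div_pos (by nlinarith) (by positivity)
  have k1 : (1 / y - ((-1 / b ^ 2) * y + (a + b) ^ 2 / (2 * a * b ^ 2))) +
      (a - b) ^ 2 / (2 * a * b ^ 2) = (y - b) ^ 2 / (b ^ 2 * y) := by
    field_simp; ring
  have k2 : (a - b) ^ 2 / (2 * a * b ^ 2) -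
      (1 / y - ((-1 / b ^ 2) * y + (a + b) ^ 2 / (2 * a * b ^ 2))) =
      (y - a) * (b ^ 2 - a * y) / (a * b ^ 2 * y) := by
    field_simp; ring
  have p1 : (0:ℝ) ≤ (y - b) ^ 2 / (b ^ 2 * y) := by positivity
  have p2 : (0:ℝ) ≤ (y - a) * (b ^ 2 - a * y) / (a * b ^ 2 * y) := by
    apply div_nonneg _ (by positivity)
    have h1 : a * y ≤ b ^ 2 := by nlinarith
    nlinarith
  have habs : |1 / y - ((-1 / b ^ 2) * y + (a + b) ^ 2 / (2 * a * b ^ 2))| ≤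
      (a - b) ^ 2 / (2 * a * b ^ 2) := by
    rw [abs_le]; constructor <;> linarith
  refine ⟨habs, (1 / y - ((-1 / b ^ 2) * y + (a + b) ^ 2 / (2 * a * b ^ 2))) /
      ((a - b) ^ 2 / (2 * a * b ^ 2)), ⟨?_, ?_⟩, ?_⟩
  · rw [le_div_iff₀ hd]
    have := neg_le_of_abs_le habs
    linarith
  · rw [div_le_one hd]
    exact le_of_abs_le habs
  · rw [mul_div_cancel₀ _ hd.ne']
    ring
end
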